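/- Let h(t,x) = exp(-x²/(4t)) for t > 0. Then (∂ₜh)³/h² = ∂ₜₜₜh + (6/t)·∂ₜₜh + (6/t²)·∂ₜh. -/

import Mathlib

noncomputable def h (t x : ℝ) : ℝ := Real.exp (-x^2/(4*t))

private lemma hE (x : ℝ) {s : ℝ} (hs : s ≠ 0) :
    HasDerivAt (fun s => h s x) (x^2/(4*s^2) * h s x) s := by
  have hu : HasDerivAt (fun s : ℝ => -x^2/(4*s)) (x^2/(4*s^2)) s := by
    have := (hasDerivAt_inv hs).const_mul (-x^2/4)
    convert this using 1 <;> (try rfl) <;> (try funext s) <;> push_cast [Pi.inv_apply] <;> field_simp <;> ring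
  have := hu.exp
  simpa [h, mul_comm] using this

private lemma hf1 (x : ℝ) {s : ℝ} (hs : s ≠ 0) :
    HasDerivAt (fun s => x^2/(4*s^2) * h s x)
      ((-2*(x^2/4)/s^3 + (x^2/4)^2/s^4) * h s x) s := by
  have hc : HasDerivAt (fun s : ℝ => x^2/(4*s^2)) (-2*(x^2/4)/s^3) s := by
    have := ((hasDerivAt_pow 2 s).inv (pow_ne_zero 2 hs)).const_mul (x^2/4)
    convert this using 1 <;> (try rfl) <;> (try funext s) <;> push_cast [Pi.inv_apply] <;> field_simp <;> ring
  have := hc.mul (hE x hs)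
  convert this using 1 <;> (try rfl)
  field_simp

private lemma hf2 (x : ℝ) {s : ℝ} (hs : s ≠ 0) :
    HasDerivAt (fun s => (-2*(x^2/4)/s^3 + (x^2/4)^2/s^4) * h s x)
      ((6*(x^2/4)/s^4 - 6*(x^2/4)^2/s^5 + (x^2/4)^3/s^6) * h s x) s := by
  have hc1 : HasDerivAt (fun s : ℝ => -2*(x^2/4)/s^3) (6*(x^2/4)/s^4) s := by
    have := ((hasDerivAt_pow 3 s).inv (pow_ne_zero 3 hs)).const_mul (-2*(x^2/4))
    convert this using 1 <;> (try rfl) <;> (try funext s) <;> push_cast [Pi.inv_apply] <;> field_simp <;> ring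
  have hc2 : HasDerivAt (fun s : ℝ => (x^2/4)^2/s^4) (-4*(x^2/4)^2/s^5) s := by
    have := ((hasDerivAt_pow 4 s).inv (pow_ne_zero 4 hs)).const_mul ((x^2/4)^2)
    convert this using 1 <;> (try rfl) <;> (try funext s) <;> push_cast [Pi.inv_apply] <;> field_simp <;> ring
  have := (hc1.add hc2).mul (hE x hs)
  convert this using 1 <;> (try rfl)
  simp only [Pi.add_apply]
  field_simp
  ring

theorem stmt_5 (t x : ℝ) (ht : 0 < t) :
    (deriv (fun s => h s x) t)^3 / (h t x)^2 =
      deriv (deriv (deriv (fun s => h s x))) t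
        + (6/t) * deriv (deriv (fun s => h s x)) t
        + (6/t^2) * deriv (fun s => h s x) t := by
  have hne : ∀ᶠ s in nhds t, s ≠ 0 := eventually_ne_nhds ht.ne'
  have e1 : deriv (fun s => h s x) =ᶠ[nhds t] fun s => x^2/(4*s^2) * h s x :=
    hne.mono fun s hs => (hE x hs).deriv
  have e2 : deriv (deriv (fun s => h s x)) =ᶠ[nhds t]
      fun s => (-2*(x^2/4)/s^3 + (x^2/4)^2/s^4) * h s x := by
    refine e1.deriv.trans (hne.mono fun s hs => ?_)
    exact (hf1 x hs).deriv
  have d1 : deriv (fun s => h s x) t = x^2/(4*t^2) * h t x := (hE x ht.ne').deriv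
  have d2 : deriv (deriv (fun s => h s x)) t
      = (-2*(x^2/4)/t^3 + (x^2/4)^2/t^4) * h t x := by
    rw [e1.deriv_eq]; exact (hf1 x ht.ne').deriv
  have d3 : deriv (deriv (deriv (fun s => h s x))) t
      = (6*(x^2/4)/t^4 - 6*(x^2/4)^2/t^5 + (x^2/4)^3/t^6) * h t x := by
    rw [e2.deriv_eq]; exact (hf2 x ht.ne').deriv
  rw [d1, d2, d3]
  have hEpos : (0:ℝ) < h t x := Real.exp_pos _
  field_simp
  ring
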